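/- Let V be an n × n complex matrix, let a ≥ 1 and J = 2^a. For 0 ≤ m ≤ a−1 let P_m = Σ_{j : bit_m(j)=1} |j⟩⟨j| be the J × J diagonal projection onto those basis indices j whose m-th binary digit equals 1. Then the ordered product Π_{m=0}^{a−1} ( V^{2^m} ⊗ P_m + I_n ⊗ (I_J − P_m) ) equals the select oracle Σ_{j=0}^{J−1} V^j ⊗ |j⟩⟨j|. (Moreover the a factors commute pairwise, so the product may be taken in any order.) -/
import Mathlib

open Matrix
open scoped Kronecker

/-- The matrix unit `|a⟩⟨b|` of size `N × N`. -/
noncomputable def matUnit (N : ℕ) (a b : ℕ) : Matrix (Fin N) (Fin N) ℂ :=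
  Matrix.of fun x y => if (x : ℕ) = a ∧ (y : ℕ) = b then 1 else 0

/-- `P_m = Σ_{j : bit_m(j) = 1} |j⟩⟨j|`, the `2^a × 2^a` diagonal projection onto those
basis indices `j` whose `m`-th binary digit equals `1`. -/
noncomputable def bitProj (a m : ℕ) : Matrix (Fin (2 ^ a)) (Fin (2 ^ a)) ℂ :=
  Matrix.of fun x y => if x = y ∧ Nat.testBit (x : ℕ) m then 1 else 0

noncomputable def Dmat (n N : ℕ) (f : Fin N → Matrix (Fin n) (Fin n) ℂ) :
    Matrix (Fin n × Fin N) (Fin n × Fin N) ℂ :=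
  ∑ j : Fin N, (f j) ⊗ₖ matUnit N j j

lemma matUnit_mul (N : ℕ) (j k : Fin N) :
    matUnit N j j * matUnit N k k = if j = k then matUnit N j j else 0 := by
  rcases eq_or_ne j k with rfl | h
  · rw [if_pos rfl]
    ext x y
    rw [Matrix.mul_apply, Finset.sum_eq_single j]
    · simp only [matUnit, Matrix.of_apply, Fin.val_inj, ite_and, if_pos rfl]
      by_cases hx : x = j <;> by_cases hy : y = j <;> simp [hx, hy]
    · intro z _ hz
      simp [matUnit, Fin.val_inj, hz]
    · simp
  · rw [if_neg h]
    ext x y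
    rw [Matrix.mul_apply]
    simp only [Matrix.zero_apply]
    apply Finset.sum_eq_zero
    intro z _
    rcases eq_or_ne z j with rfl | hz
    · simp [matUnit, Fin.val_inj, h]
    · simp [matUnit, Fin.val_inj, hz]

lemma Dmat_mul {n N : ℕ} (f g : Fin N → Matrix (Fin n) (Fin n) ℂ) :
    Dmat n N f * Dmat n N g = Dmat n N (fun j => f j * g j) := by
  unfold Dmat
  rw [Finset.sum_mul_sum]
  refine Finset.sum_congr rfl fun j _ => ?_
  rw [Finset.sum_eq_single j]
  · rw [← Matrix.mul_kronecker_mul, matUnit_mul, if_pos rfl]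
  · intro k _ hk
    rw [← Matrix.mul_kronecker_mul, matUnit_mul, if_neg (Ne.symm hk)]
    exact Matrix.kronecker_zero _
  · intro h; exact absurd (Finset.mem_univ j) h

lemma Dmat_one {n N : ℕ} : Dmat n N (fun _ => 1) = 1 := by
  ext ⟨x1, x2⟩ ⟨y1, y2⟩
  simp only [Dmat, Matrix.sum_apply, Matrix.kroneckerMap_apply, matUnit, Matrix.of_apply,
    Fin.val_inj]
  rw [Finset.sum_eq_single x2]
  · simp only [Matrix.one_apply, Prod.ext_iff, if_pos rfl, and_true, Prod.mk.injEq]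
    by_cases h1 : x1 = y1 <;> by_cases h2 : x2 = y2 <;> simp [h1, h2, eq_comm]
  · intro k _ hk
    simp [Ne.symm hk]
  · simp

lemma list_prod_Dmat {n N : ℕ} (L : List (Fin N → Matrix (Fin n) (Fin n) ℂ)) :
    (L.map (Dmat n N)).prod = Dmat n N (fun j => (L.map (fun f => f j)).prod) := by
  induction L with
  | nil => simpa using (Dmat_one (n := n) (N := N)).symm
  | cons f L ih =>
      simp only [List.map_cons, List.prod_cons, ih, Dmat_mul]

lemma bits_sum (a : ℕ) : ∀ j : ℕ, j < 2 ^ a →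
    (∑ m ∈ Finset.range a, if Nat.testBit j m then 2 ^ m else 0) = j := by
  induction a with
  | zero => intro j hj; interval_cases j; simp
  | succ a ih =>
      intro j hj
      rw [pow_succ] at hj
      have h2 : j / 2 < 2 ^ a := by omega
      have hih := ih (j / 2) h2
      rw [Finset.sum_range_succ' (fun m => if Nat.testBit j m then 2 ^ m else 0)]
      calc (∑ m ∈ Finset.range a, if Nat.testBit j (m + 1) then 2 ^ (m + 1) else 0)
            + (if Nat.testBit j 0 then 2 ^ 0 else 0)
          = 2 * (∑ m ∈ Finset.range a, if Nat.testBit (j / 2) m then 2 ^ m else 0)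
            + j % 2 := by
            rw [Finset.mul_sum]
            congr 1
            · refine Finset.sum_congr rfl fun m _ => ?_
              rw [Nat.testBit_add_one]
              split <;> ring
            · rw [Nat.testBit_zero]
              rcases Nat.mod_two_eq_zero_or_one j with h | h <;> simp [h]
        _ = j := by rw [hih]; omega

lemma pow_list_ofFn {M : Type*} [Monoid M] (x : M) (a : ℕ) (f : ℕ → ℕ) :
    (List.ofFn fun m : Fin a => x ^ f (m : ℕ)).prod
      = x ^ ∑ m ∈ Finset.range a, f m := by
  induction a generalizing f with
  | zero => simp
  | succ a ih =>
      rw [List.ofFn_succ, List.prod_cons, Finset.sum_range_succ' f]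
      simp only [Fin.val_succ, Fin.val_zero]
      rw [ih (fun m => f (m + 1)), ← pow_add, Nat.add_comm]

lemma factor_eq {n : ℕ} (V : Matrix (Fin n) (Fin n) ℂ) (a m : ℕ) :
    (V ^ 2 ^ m) ⊗ₖ bitProj a m + (1 : Matrix (Fin n) (Fin n) ℂ) ⊗ₖ (1 - bitProj a m)
      = Dmat n (2 ^ a) (fun j => V ^ (if Nat.testBit (j : ℕ) m then 2 ^ m else 0)) := by
  ext ⟨x1, x2⟩ ⟨y1, y2⟩
  simp only [Dmat, Matrix.sum_apply, Matrix.add_apply, Matrix.kroneckerMap_apply,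
    Matrix.sub_apply, bitProj, matUnit, Matrix.of_apply, Fin.val_inj]
  rw [Finset.sum_eq_single x2]
  · rcases eq_or_ne x2 y2 with heq | h
    · subst heq
      by_cases hb : Nat.testBit (x2 : ℕ) m
      · simp [hb, Matrix.one_apply]
      · simp [hb, Matrix.one_apply]
    · simp [h, Ne.symm h, Matrix.one_apply]
  · intro k _ hk
    simp [Ne.symm hk]
  · simp

/-- Let `V` be an `n × n` complex matrix, `a ≥ 1` and `J = 2^a`.  The ordered
product `Π_{m=0}^{a−1} (V^{2^m} ⊗ P_m + I_n ⊗ (I_J − P_m))` equals the select oracle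
`Σ_{j=0}^{J−1} V^j ⊗ |j⟩⟨j|`; moreover the `a` factors commute pairwise (so the product may be
taken in any order). -/
theorem select_oracle_product {n : ℕ} (V : Matrix (Fin n) (Fin n) ℂ) (a : ℕ) (ha : 1 ≤ a) :
    (∀ m m' : Fin a, Commute
        ((V ^ 2 ^ (m : ℕ)) ⊗ₖ bitProj a m + (1 : Matrix (Fin n) (Fin n) ℂ) ⊗ₖ (1 - bitProj a m))
        ((V ^ 2 ^ (m' : ℕ)) ⊗ₖ bitProj a m'
          + (1 : Matrix (Fin n) (Fin n) ℂ) ⊗ₖ (1 - bitProj a m'))) ∧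
    (List.ofFn fun m : Fin a =>
        (V ^ 2 ^ (m : ℕ)) ⊗ₖ bitProj a m
          + (1 : Matrix (Fin n) (Fin n) ℂ) ⊗ₖ (1 - bitProj a m)).prod =
      ∑ j ∈ Finset.range (2 ^ a), (V ^ j) ⊗ₖ matUnit (2 ^ a) j j := by
  constructor
  · intro m m'
    unfold Commute SemiconjBy
    rw [factor_eq, factor_eq, Dmat_mul, Dmat_mul]
    exact congrArg _ (funext fun j => (Commute.pow_pow_self V _ _).eq)
  · have hfac : (List.ofFn fun m : Fin a =>
        (V ^ 2 ^ (m : ℕ)) ⊗ₖ bitProj a m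
          + (1 : Matrix (Fin n) (Fin n) ℂ) ⊗ₖ (1 - bitProj a m))
        = (List.ofFn (fun (m : Fin a) (j : Fin (2 ^ a)) =>
            (V ^ (if Nat.testBit (j : ℕ) (m : ℕ) then 2 ^ (m : ℕ) else 0)))).map
              (Dmat n (2 ^ a)) := by
      rw [List.map_ofFn]
      simp only [factor_eq]
      rfl
    rw [hfac, list_prod_Dmat,
      ← Fin.sum_univ_eq_sum_range (fun j => (V ^ j) ⊗ₖ matUnit (2 ^ a) j j) (2 ^ a)]
    have hD : ∑ j : Fin (2 ^ a), (V ^ (j : ℕ)) ⊗ₖ matUnit (2 ^ a) j j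
        = Dmat n (2 ^ a) (fun j => V ^ (j : ℕ)) := rfl
    rw [hD]
    refine congrArg _ (funext fun j => ?_)
    rw [List.map_ofFn]
    show (List.ofFn fun m : Fin a =>
        V ^ (if Nat.testBit (j : ℕ) (m : ℕ) then 2 ^ (m : ℕ) else 0)).prod = _
    rw [pow_list_ofFn V a (fun m => if Nat.testBit (j : ℕ) m then 2 ^ m else 0),
      bits_sum a j j.isLt]
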